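/- The quotient ℂ-vector space (ker D)/(im D) is 2-dimensional, with basis given by the classes of the identity matrix 1 and of φ₀ = [[0, z⁻¹], [−1, 0]]; moreover φ₀·φ₀ + s⁻¹·1 lies in the image of D. Consequently the cohomology algebra Hom_{MF(W−2s)}(F, F) is the Clifford algebra on one generator x over ℂ with relation x² = −1/s. -/

import Mathlib

open LaurentPolynomial

noncomputable def ev (s : ℂ) (hs : s ≠ 0) : LaurentPolynomial ℂ →ₐ[ℂ] ℂ :=
  AddMonoidAlgebra.lift ℂ ℂ ℤ ((Units.coeHom ℂ).comp (zpowersHom ℂˣ (Units.mk0 s hs)))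

lemma ev_T (s : ℂ) (hs : s ≠ 0) (n : ℤ) : ev s hs (T n) = ((Units.mk0 s hs ^ n : ℂˣ) : ℂ) := by
  rw [ev, T, AddMonoidAlgebra.lift_single]
  simp

lemma ev_C (s : ℂ) (hs : s ≠ 0) (a : ℂ) : ev s hs (C a) = a := by
  simpa using (ev s hs).commutes a

lemma ev_toLaurent (s : ℂ) (hs : s ≠ 0) (P : Polynomial ℂ) :
    ev s hs (Polynomial.toLaurent P) = P.eval s := by
  have h : (ev s hs).comp (Polynomial.toLaurentAlg (R := ℂ)) = Polynomial.aeval s := by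
    apply Polynomial.algHom_ext
    simp [Polynomial.toLaurentAlg_apply, ev_T]
  have := congrArg (fun f => f P) h
  simpa only [AlgHom.comp_apply, Polynomial.toLaurentAlg_apply, Polynomial.coe_aeval_eq_eval] using this

lemma vne (s : ℂ) : (T 1 - C s : LaurentPolynomial ℂ) ≠ 0 := by
  have : (T 1 - C s : LaurentPolynomial ℂ) = Polynomial.toLaurent (Polynomial.X - Polynomial.C s) := by
    simp
  rw [this, Ne, Polynomial.toLaurent_eq_zero]
  exact Polynomial.X_sub_C_ne_zero s

lemma dvd_of_ev_eq_zero (s : ℂ) (hs : s ≠ 0) (p : LaurentPolynomial ℂ) (h : ev s hs p = 0) :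
    ∃ q, p = (T 1 - C s) * q := by
  obtain ⟨n, P, hP⟩ := p.exists_T_pow
  have hev : P.eval s = 0 := by
    rw [← ev_toLaurent s hs, hP, map_mul, h, zero_mul]
  obtain ⟨Q, hQ⟩ := (Polynomial.dvd_iff_isRoot.2 hev : _ ∣ P)
  refine ⟨Polynomial.toLaurent Q * T (-(n : ℤ)), ?_⟩
  have hp : p = Polynomial.toLaurent P * T (-(n : ℤ)) := by
    rw [hP, mul_T_assoc, add_neg_cancel, T_zero, mul_one]
  rw [hp, hQ, map_mul]
  have : Polynomial.toLaurent (Polynomial.X - Polynomial.C s) = (T 1 - C s : LaurentPolynomial ℂ) := by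
    simp
  rw [this]; ring

/-- The matrix `d` of the matrix factorization `F` of `W - 2s`, `W = z + s²/z`,
over `R = ℂ[z,z⁻¹]`. -/
noncomputable def dMat (s : ℂ) : Matrix (Fin 2) (Fin 2) (LaurentPolynomial ℂ) :=
  !![0, T (-1) * (T 1 - C s); T 1 - C s, 0]

/-- The grading sign matrix `ε = diag(1, -1)`. -/
noncomputable def epsMat : Matrix (Fin 2) (Fin 2) (LaurentPolynomial ℂ) :=
  !![1, 0; 0, -1]

/-- The differential `D(φ) = d·φ − (ε·φ·ε)·d` of the endomorphism complex
`Hom_{CF(W-2s)}(F, F)`, as a ℂ-linear map. -/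
noncomputable def Dlin (s : ℂ) :
    Matrix (Fin 2) (Fin 2) (LaurentPolynomial ℂ) →ₗ[ℂ]
      Matrix (Fin 2) (Fin 2) (LaurentPolynomial ℂ) :=
  LinearMap.mulLeft ℂ (dMat s) -
    (LinearMap.mulRight ℂ (dMat s)) ∘ₗ (LinearMap.mulLeft ℂ epsMat) ∘ₗ
      (LinearMap.mulRight ℂ epsMat)

/-- The odd degree generator `φ₀` of the cohomology of the endomorphism complex. -/
noncomputable def phi0 : Matrix (Fin 2) (Fin 2) (LaurentPolynomial ℂ) :=
  !![0, T (-1); -1, 0]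

lemma Dlin_mat (s : ℂ) (a b c e : LaurentPolynomial ℂ) :
    Dlin s !![a, b; c, e] =
      !![T (-1) * (T 1 - C s) * c + (T 1 - C s) * b,
         T (-1) * (T 1 - C s) * e - T (-1) * (T 1 - C s) * a;
         (T 1 - C s) * a - (T 1 - C s) * e,
         (T 1 - C s) * b + T (-1) * (T 1 - C s) * c] := by
  have hD : Dlin s !![a,b;c,e] = dMat s * !![a,b;c,e] - epsMat * (!![a,b;c,e] * epsMat) * dMat s := by
    simp [Dlin, LinearMap.mulLeft_apply, LinearMap.mulRight_apply, LinearMap.sub_apply,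
      LinearMap.comp_apply]
  rw [hD]
  ext i j
  fin_cases i <;> fin_cases j <;>
    simp [dMat, epsMat, Matrix.mul_apply, Fin.sum_univ_two] <;> ring_nf

lemma hT_inv : (T (-1) : LaurentPolynomial ℂ) * T 1 = 1 := by
  rw [← T_add]; norm_num

lemma une (s : ℂ) : (T (-1) * (T 1 - C s) : LaurentPolynomial ℂ) ≠ 0 :=
  mul_ne_zero (isUnit_T (-1)).ne_zero (vne s)

lemma mem_ker_iff (s : ℂ) (φ : Matrix (Fin 2) (Fin 2) (LaurentPolynomial ℂ)) :
    φ ∈ LinearMap.ker (Dlin s) ↔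
      φ 1 1 = φ 0 0 ∧ φ 1 0 = -(T 1 * φ 0 1) := by
  have hφ : φ = !![φ 0 0, φ 0 1; φ 1 0, φ 1 1] := by
    ext i j; fin_cases i <;> fin_cases j <;> simp
  have hu := une s
  have hT := hT_inv
  constructor
  · intro h
    have h0 : Dlin s φ = 0 := h
    rw [hφ, Dlin_mat] at h0
    have h01 : T (-1) * (T 1 - C s) * φ 1 1 - T (-1) * (T 1 - C s) * φ 0 0 = 0 := by
      have := congrFun (congrFun h0 0) 1; simpa using this
    have h00 : T (-1) * (T 1 - C s) * φ 1 0 + (T 1 - C s) * φ 0 1 = 0 := by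
      have := congrFun (congrFun h0 0) 0; simpa using this
    constructor
    · have hz : T (-1) * (T 1 - C s) * (φ 1 1 - φ 0 0) = 0 := by linear_combination h01
      rcases mul_eq_zero.1 hz with h' | h'
      · exact absurd h' hu
      · exact sub_eq_zero.1 h'
    · have hz : T (-1) * (T 1 - C s) * (φ 1 0 + T 1 * φ 0 1) = 0 := by
        linear_combination h00 + ((T 1 - C s) * φ 0 1) * hT
      rcases mul_eq_zero.1 hz with h' | h'
      · exact absurd h' hu
      · exact eq_neg_of_add_eq_zero_left h'
  · rintro ⟨h1, h2⟩
    show Dlin s φ = 0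
    rw [hφ, Dlin_mat]
    have e00 : T (-1) * (T 1 - C s) * φ 1 0 + (T 1 - C s) * φ 0 1 = 0 := by
      linear_combination (T (-1) * (T 1 - C s)) * h2 - ((T 1 - C s) * φ 0 1) * hT
    have e01 : T (-1) * (T 1 - C s) * φ 1 1 - T (-1) * (T 1 - C s) * φ 0 0 = 0 := by
      linear_combination (T (-1) * (T 1 - C s)) * h1
    have e10 : (T 1 - C s) * φ 0 0 - (T 1 - C s) * φ 1 1 = 0 := by
      linear_combination (-(T 1 - C s)) * h1
    have e11 : (T 1 - C s) * φ 0 1 + T (-1) * (T 1 - C s) * φ 1 0 = 0 := by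
      linear_combination (T (-1) * (T 1 - C s)) * h2 - ((T 1 - C s) * φ 0 1) * hT
    rw [e00, e01, e10, e11]
    ext i j
    fin_cases i <;> fin_cases j <;> simp

noncomputable def Lmap (s : ℂ) (hs : s ≠ 0) :
    Matrix (Fin 2) (Fin 2) (LaurentPolynomial ℂ) →ₗ[ℂ] (Fin 2 → ℂ) where
  toFun φ := ![ev s hs (φ 0 0), ev s hs (T 1 * φ 0 1)]
  map_add' φ ψ := by
    funext i; fin_cases i <;> simp [mul_add, Matrix.add_apply]
  map_smul' r φ := by
    funext i; fin_cases i <;> simp [Matrix.smul_apply, Algebra.mul_smul_comm]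

lemma Lmap_mat (s : ℂ) (hs : s ≠ 0) (a b c e : LaurentPolynomial ℂ) :
    Lmap s hs !![a, b; c, e] = ![ev s hs a, ev s hs (T 1 * b)] := by
  simp only [Lmap, LinearMap.coe_mk, AddHom.coe_mk]
  simp

lemma Lmap_range (s : ℂ) (hs : s ≠ 0)
    (φ : Matrix (Fin 2) (Fin 2) (LaurentPolynomial ℂ)) :
    Lmap s hs (Dlin s φ) = 0 := by
  have hφ : φ = !![φ 0 0, φ 0 1; φ 1 0, φ 1 1] := by
    ext i j; fin_cases i <;> fin_cases j <;> simp
  rw [hφ, Dlin_mat, Lmap_mat]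
  have hv : ev s hs (T 1 - C s) = 0 := by
    rw [map_sub, ev_T, ev_C]; simp
  have hA : ev s hs (T (-1) * (T 1 - C s) * φ 1 0 + (T 1 - C s) * φ 0 1) = 0 := by
    rw [show T (-1) * (T 1 - C s) * φ 1 0 + (T 1 - C s) * φ 0 1
          = (T 1 - C s) * (T (-1) * φ 1 0 + φ 0 1) by ring, map_mul, hv, zero_mul]
  have hB : ev s hs (T 1 * (T (-1) * (T 1 - C s) * φ 1 1 - T (-1) * (T 1 - C s) * φ 0 0)) = 0 := by
    rw [show T 1 * (T (-1) * (T 1 - C s) * φ 1 1 - T (-1) * (T 1 - C s) * φ 0 0)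
          = (T 1 - C s) * (T 1 * T (-1) * (φ 1 1 - φ 0 0)) by ring, map_mul, hv, zero_mul]
  rw [hA, hB]
  funext i; fin_cases i <;> simp

lemma Lmap_apply (s : ℂ) (hs : s ≠ 0) (φ : Matrix (Fin 2) (Fin 2) (LaurentPolynomial ℂ)) :
    Lmap s hs φ = ![ev s hs (φ 0 0), ev s hs (T 1 * φ 0 1)] := rfl

lemma mem_range_of (s : ℂ) (hs : s ≠ 0) (φ : Matrix (Fin 2) (Fin 2) (LaurentPolynomial ℂ))
    (hk : φ ∈ LinearMap.ker (Dlin s)) (hL : Lmap s hs φ = 0) :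
    φ ∈ LinearMap.range (Dlin s) := by
  obtain ⟨h1, h2⟩ := (mem_ker_iff s φ).1 hk
  have hT := hT_inv
  have hL0 : ev s hs (φ 0 0) = 0 := by
    have := congrFun hL 0; rw [Lmap_apply] at this; simpa using this
  have hL1 : ev s hs (T 1 * φ 0 1) = 0 := by
    have := congrFun hL 1; rw [Lmap_apply] at this; simpa using this
  obtain ⟨q, hq⟩ := dvd_of_ev_eq_zero s hs _ hL0
  obtain ⟨r, hr⟩ := dvd_of_ev_eq_zero s hs _ hL1
  refine ⟨!![0, q; 0, r], ?_⟩
  rw [Dlin_mat]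
  refine Matrix.ext fun i j => ?_
  fin_cases i <;> fin_cases j <;> simp <;>
    first
      | linear_combination -hq
      | linear_combination (-(T (-1))) * hr + (φ 0 1) * hT
      | linear_combination hr - h2
      | linear_combination -hq - h1

lemma one_mem_ker (s : ℂ) :
    (1 : Matrix (Fin 2) (Fin 2) (LaurentPolynomial ℂ)) ∈ LinearMap.ker (Dlin s) :=
  (mem_ker_iff s 1).2 ⟨by simp [Matrix.one_apply], by simp [Matrix.one_apply]⟩

lemma phi0_mem_ker (s : ℂ) : phi0 ∈ LinearMap.ker (Dlin s) := by
  refine (mem_ker_iff s phi0).2 ⟨by simp [phi0], ?_⟩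
  show (-1 : LaurentPolynomial ℂ) = -(T 1 * T (-1))
  rw [← T_add]; norm_num

lemma sq_phi0_mem_range (s : ℂ) (hs : s ≠ 0) :
    phi0 * phi0 + s⁻¹ • (1 : Matrix (Fin 2) (Fin 2) (LaurentPolynomial ℂ)) ∈
      LinearMap.range (Dlin s) := by
  refine ⟨!![0, 0; C s⁻¹, 0], ?_⟩
  have hT := hT_inv
  have h2 : (C s : LaurentPolynomial ℂ) * C s⁻¹ = 1 := by
    rw [← map_mul, mul_inv_cancel₀ hs, map_one]
  have key : T (-1) * (T 1 - C s) * C s⁻¹ + (T 1 - C s) * 0 = -(T (-1)) + s⁻¹ • (1 : LaurentPolynomial ℂ) := by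
    rw [Algebra.smul_def, mul_one, ← C_eq_algebraMap]
    linear_combination (C s⁻¹ : LaurentPolynomial ℂ) * hT - (T (-1)) * h2
  rw [Dlin_mat]
  refine Matrix.ext fun i j => ?_
  fin_cases i <;> fin_cases j <;>
    simp [phi0, Matrix.mul_apply, Fin.sum_univ_two, Matrix.one_apply, Matrix.smul_apply] <;>
    · rw [Algebra.smul_def, mul_one, ← C_eq_algebraMap]
      linear_combination (C s⁻¹ : LaurentPolynomial ℂ) * hT - (T (-1)) * h2

lemma Lmap_one (s : ℂ) (hs : s ≠ 0) : Lmap s hs 1 = ![1, 0] := by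
  have h0 : (1 : Matrix (Fin 2) (Fin 2) (LaurentPolynomial ℂ)) 0 0 = 1 := Matrix.one_apply_eq 0
  have h1 : (1 : Matrix (Fin 2) (Fin 2) (LaurentPolynomial ℂ)) 0 1 = 0 :=
    Matrix.one_apply_ne (by decide)
  rw [Lmap_apply, h0, h1, mul_zero, map_zero, map_one]

lemma Lmap_phi0 (s : ℂ) (hs : s ≠ 0) : Lmap s hs phi0 = ![0, 1] := by
  have h0 : phi0 0 0 = 0 := by simp [phi0]
  have h1 : T 1 * phi0 0 1 = 1 := by
    have hp : phi0 0 1 = T (-1) := by simp [phi0]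
    rw [hp, ← T_add, show (1 : ℤ) + -1 = 0 by norm_num, T_zero]
  rw [Lmap_apply, h0, h1, map_zero, map_one]

/-- The cohomology `(ker D)/(im D)` is a 2-dimensional ℂ-vector space with basis
the classes of `1` and `φ₀`, and `φ₀·φ₀ + s⁻¹·1 ∈ im D`; hence the cohomology
algebra is the Clifford algebra `ℂ⟨x⟩/(x² = -1/s)`. -/
theorem cohomology_of_endomorphism_complex_is_clifford (s : ℂ) (hs : s ≠ 0) :
    ∃ (h1 : (1 : Matrix (Fin 2) (Fin 2) (LaurentPolynomial ℂ)) ∈ LinearMap.ker (Dlin s))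
      (h0 : phi0 ∈ LinearMap.ker (Dlin s)),
      (∃ B : Module.Basis (Fin 2) ℂ
          (LinearMap.ker (Dlin s) ⧸
            (LinearMap.range (Dlin s)).comap (LinearMap.ker (Dlin s)).subtype),
        B 0 = Submodule.Quotient.mk ⟨1, h1⟩ ∧
        B 1 = Submodule.Quotient.mk ⟨phi0, h0⟩) ∧
      phi0 * phi0 + s⁻¹ • (1 : Matrix (Fin 2) (Fin 2) (LaurentPolynomial ℂ)) ∈
        LinearMap.range (Dlin s) := by
  refine ⟨one_mem_ker s, phi0_mem_ker s, ?_, sq_phi0_mem_range s hs⟩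
  set K := LinearMap.ker (Dlin s)
  set I := (LinearMap.range (Dlin s)).comap K.subtype with hI
  let f : K →ₗ[ℂ] (Fin 2 → ℂ) := (Lmap s hs) ∘ₗ K.subtype
  have hIf : I ≤ LinearMap.ker f := by
    rintro ⟨x, hx⟩ hmem
    obtain ⟨ψ, hψ⟩ := hmem
    show Lmap s hs x = 0
    have hψ' : Dlin s ψ = x := hψ
    rw [← hψ']
    exact Lmap_range s hs ψ
  let Lq := I.liftQ f hIf
  have hker : LinearMap.ker f ≤ I := by
    rintro ⟨x, hx⟩ hmem
    exact mem_range_of s hs x hx hmem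
  have hinj : LinearMap.ker Lq = ⊥ := Submodule.ker_liftQ_eq_bot I f hIf hker
  have hsurj : LinearMap.range Lq = ⊤ := by
    rw [Submodule.range_liftQ]
    rw [LinearMap.range_eq_top]
    intro y
    refine ⟨y 0 • ⟨1, one_mem_ker s⟩ + y 1 • ⟨phi0, phi0_mem_ker s⟩, ?_⟩
    have e1 : f ⟨1, one_mem_ker s⟩ = ![1, 0] := Lmap_one s hs
    have e0 : f ⟨phi0, phi0_mem_ker s⟩ = ![0, 1] := Lmap_phi0 s hs
    rw [map_add, map_smul, map_smul, e1, e0]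
    funext i; fin_cases i <;> simp
  let e := LinearEquiv.ofBijective Lq ⟨LinearMap.ker_eq_bot.1 hinj, LinearMap.range_eq_top.1 hsurj⟩
  refine ⟨(Pi.basisFun ℂ (Fin 2)).map e.symm, ?_, ?_⟩
  · rw [Module.Basis.map_apply, LinearEquiv.symm_apply_eq]
    show Pi.basisFun ℂ (Fin 2) 0 = Lq (Submodule.Quotient.mk ⟨1, one_mem_ker s⟩)
    rw [Submodule.liftQ_apply]
    show _ = Lmap s hs 1
    rw [Lmap_one s hs]
    funext i; fin_cases i <;> simp [Pi.basisFun_apply]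
  · rw [Module.Basis.map_apply, LinearEquiv.symm_apply_eq]
    show Pi.basisFun ℂ (Fin 2) 1 = Lq (Submodule.Quotient.mk ⟨phi0, phi0_mem_ker s⟩)
    rw [Submodule.liftQ_apply]
    show _ = Lmap s hs phi0
    rw [Lmap_phi0 s hs]
    funext i; fin_cases i <;> simp [Pi.basisFun_apply]
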